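/- Let W be a standard one-dimensional Brownian motion on a probability space (Ω, 𝓕, ℙ). Then 1 − E[ cos( h · exp( (x + W(t))³ ) ) ] ≥ exp( −(8/t) · ( |ln(π/(2h))|^{2/3} + x² ) ) for every t ∈ (0,∞), every x ∈ ℝ and every h ∈ (0, (π/2)·exp( −(max(√t + x, 0))³ )]. -/

import Mathlib

open MeasureTheory ProbabilityTheory
open scoped ENNReal

/-- A standard one-dimensional Brownian motion on a probability space `(Ω, 𝓕, P)`:
a stochastic process `W : [0,∞) × Ω → ℝ` (modelled as `W : ℝ → Ω → ℝ`, relevant only for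
nonnegative times) with `W 0 = 0`, P-almost surely continuous sample paths,
independent increments, and `W t - W s` normally distributed with mean `0` and
variance `t - s` for all `0 ≤ s ≤ t`. -/
structure IsStandardBrownianMotion {Ω : Type*} [MeasurableSpace Ω] (P : Measure Ω)
    (W : ℝ → Ω → ℝ) : Prop where
  isProbabilityMeasure : IsProbabilityMeasure P
  measurable : ∀ t : ℝ, Measurable (W t)
  start : ∀ ω, W 0 ω = 0
  ae_continuous : ∀ᵐ ω ∂P, ContinuousOn (fun t => W t ω) (Set.Ici 0)
  indep_increments : ∀ (n : ℕ) (t : Fin (n + 1) → ℝ), (∀ i, 0 ≤ t i) → Monotone t →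
    iIndepFun (m := fun _ => Real.measurableSpace)
      (fun (i : Fin n) (ω : Ω) => W (t i.succ) ω - W (t i.castSucc) ω) P
  gauss_increments : ∀ s t : ℝ, 0 ≤ s → s ≤ t →
    P.map (fun ω => W t ω - W s ω) = gaussianReal 0 (Real.toNNReal (t - s))


open Real
open Filter
open scoped NNReal

section BMAux

lemma iUnion_Ico_eq_Ici' {e : ℕ → ℝ} (hmono : Monotone e)
    (htop : Tendsto e atTop atTop) :
    (⋃ m, Set.Ico (e m) (e (m + 1))) = Set.Ici (e 0) := by
  ext y
  simp only [Set.mem_iUnion, Set.mem_Ico, Set.mem_Ici]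
  constructor
  · rintro ⟨m, h1, _⟩; exact (hmono (Nat.zero_le m)).trans h1
  · intro hy
    have hex : ∃ n, y < e n := (htop.eventually (eventually_gt_atTop y)).exists
    classical
    have hn : y < e (Nat.find hex) := Nat.find_spec hex
    have hn0 : Nat.find hex ≠ 0 := by
      intro h0
      rw [h0] at hn
      exact absurd hy (not_le.mpr hn)
    obtain ⟨m, hm⟩ : ∃ m, Nat.find hex = m + 1 :=
      ⟨Nat.find hex - 1, (Nat.succ_pred_eq_of_ne_zero hn0).symm⟩
    refine ⟨m, ?_, by rw [← hm]; exact hn⟩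
    have := Nat.find_min hex (by omega : m < Nat.find hex)
    exact not_lt.mp this

lemma pairwise_disjoint_Ico' {f g : ℕ → ℝ} (h : ∀ i j, i < j → g i ≤ f j) :
    Pairwise (Function.onFun Disjoint fun k => Set.Ico (f k) (g k)) := by
  intro i j hij
  rcases hij.lt_or_gt with hlt | hlt
  · exact Set.Ico_disjoint_Ico.mpr
      (le_trans (min_le_left _ _) (le_trans (h i j hlt) (le_max_right _ _)))
  · exact Set.Ico_disjoint_Ico.mpr
      (le_trans (min_le_right _ _) (le_trans (h j i hlt) (le_max_left _ _)))

lemma gaussianPDFReal_anti {V : ℝ≥0} {u v : ℝ} (hu : 0 ≤ u) (huv : u ≤ v) :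
    gaussianPDFReal 0 V v ≤ gaussianPDFReal 0 V u := by
  unfold gaussianPDFReal
  simp only [sub_zero]
  rcases eq_or_ne V 0 with rfl | hV
  · simp
  · have hV' : (0:ℝ) < (V:ℝ) := by positivity
    apply mul_le_mul_of_nonneg_left _ (by positivity)
    apply Real.exp_le_exp.mpr
    apply div_le_div_of_nonneg_right ?_ (by positivity)
    nlinarith

lemma gaussian_Ico_lower {V : ℝ≥0} (hV : V ≠ 0) {u v : ℝ} (hu : 0 ≤ u) :
    ENNReal.ofReal ((v - u) * gaussianPDFReal 0 V v) ≤ gaussianReal 0 V (Set.Ico u v) := by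
  rw [gaussianReal_apply 0 hV]
  have h1 : ENNReal.ofReal ((v - u) * gaussianPDFReal 0 V v)
      = ∫⁻ _ in Set.Ico u v, ENNReal.ofReal (gaussianPDFReal 0 V v) := by
    rw [MeasureTheory.setLIntegral_const, Real.volume_Ico,
      ← ENNReal.ofReal_mul (gaussianPDFReal_nonneg _ _ _), mul_comm]
  rw [h1]
  refine setLIntegral_mono (measurable_gaussianPDF _ _) fun y hy => ?_
  exact ENNReal.ofReal_le_ofReal
    (gaussianPDFReal_anti (hu.trans hy.1) hy.2.le)

lemma gaussian_Ico_upper {V : ℝ≥0} (hV : V ≠ 0) {u v : ℝ} (hu : 0 ≤ u) :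
    gaussianReal 0 V (Set.Ico u v) ≤ ENNReal.ofReal ((v - u) * gaussianPDFReal 0 V u) := by
  rw [gaussianReal_apply 0 hV]
  have h1 : ENNReal.ofReal ((v - u) * gaussianPDFReal 0 V u)
      = ∫⁻ _ in Set.Ico u v, ENNReal.ofReal (gaussianPDFReal 0 V u) := by
    rw [MeasureTheory.setLIntegral_const, Real.volume_Ico,
      ← ENNReal.ofReal_mul (gaussianPDFReal_nonneg _ _ _), mul_comm]
  rw [h1]
  refine setLIntegral_mono measurable_const fun y hy => ?_
  exact ENNReal.ofReal_le_ofReal (gaussianPDFReal_anti hu hy.1)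

lemma cube_root_concave {a b c : ℝ} (ha : 0 ≤ a) (hc : 0 ≤ c) (hb : 0 ≤ b)
    (h : a ^ 3 + c ^ 3 ≤ 2 * b ^ 3) : a + c ≤ 2 * b := by
  have h1 : (a + c) ^ 3 ≤ (2 * b) ^ 3 := by
    nlinarith [mul_nonneg (add_nonneg ha hc) (sq_nonneg (a - c)), sq_nonneg (a + c)]
  exact le_of_pow_le_pow_left₀ (by norm_num) (by linarith) h1

end BMAux

set_option maxHeartbeats 1000000 in
/-- first lower bound of Lemma 3.3: for every `t ∈ (0,∞)`, `x ∈ ℝ`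
and `h ∈ (0, (π/2)·exp(−(max(√t + x, 0))³)]`,
`1 − E[cos(h·exp((x + W t)³))] ≥ exp(−(8/t)·(|ln(π/(2h))|^{2/3} + x²))`. -/
theorem one_sub_expectation_cos_ge
    {Ω : Type*} [MeasurableSpace Ω] (P : Measure Ω) (W : ℝ → Ω → ℝ)
    (hW : IsStandardBrownianMotion P W)
    (t x h : ℝ) (ht : 0 < t) (hh : 0 < h)
    (hh' : h ≤ (π / 2) * Real.exp (-(max (Real.sqrt t + x) 0) ^ 3)) :
    1 - ∫ ω, Real.cos (h * Real.exp ((x + W t ω) ^ 3)) ∂P ≥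
      Real.exp (-(8 / t) * (|Real.log (π / (2 * h))| ^ ((2:ℝ)/3) + x ^ 2)) := by
  haveI : IsProbabilityMeasure P := hW.isProbabilityMeasure
  have hπ : (0:ℝ) < π := Real.pi_pos
  set M : ℝ := max (Real.sqrt t + x) 0 with hMdef
  have hM0 : 0 ≤ M := le_max_right _ _
  set L : ℝ := Real.log (π / (2 * h)) with hLdef
  -- basic facts about L and p
  have hML : M ^ 3 ≤ L := by
    have h1 : Real.exp (M ^ 3) ≤ π / (2 * h) := by
      rw [le_div_iff₀ (by positivity)]
      have h2 := mul_le_mul_of_nonneg_right hh' (Real.exp_pos (M ^ 3)).le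
      rw [mul_assoc, ← Real.exp_add, neg_add_cancel, Real.exp_zero, mul_one] at h2
      linarith
    exact (Real.le_log_iff_exp_le (by positivity)).mpr h1
  have hL0 : 0 ≤ L := le_trans (by positivity) hML
  set p : ℝ := L ^ ((1:ℝ)/3) with hpdef
  have hp0 : 0 ≤ p := Real.rpow_nonneg hL0 _
  have hp3 : p ^ 3 = L := by
    rw [hpdef, ← Real.rpow_natCast (L ^ ((1:ℝ)/3)) 3, ← Real.rpow_mul hL0]
    norm_num
  have hp2 : |L| ^ ((2:ℝ)/3) = p ^ 2 := by
    rw [abs_of_nonneg hL0, hpdef, ← Real.rpow_natCast (L ^ ((1:ℝ)/3)) 2,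
      ← Real.rpow_mul hL0]
    norm_num
  have hMp : M ≤ p := by
    calc M = (M ^ 3) ^ ((1:ℝ)/3) := by
          rw [← Real.rpow_natCast M 3, ← Real.rpow_mul hM0]; norm_num
      _ ≤ p := Real.rpow_le_rpow (by positivity) hML (by norm_num)
  have hsqp : Real.sqrt t + x ≤ p := le_trans (le_max_left _ _) hMp
  have hst : 0 < Real.sqrt t := Real.sqrt_pos.mpr ht
  -- the sequence of interval endpoints
  set e : ℕ → ℝ := fun m => (L + Real.log (2 * m + 1)) ^ ((1:ℝ)/3) - x with hedef
  have hlog_nonneg : ∀ m : ℕ, 0 ≤ Real.log (2 * m + 1) := fun m =>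
    Real.log_nonneg (by push_cast; linarith [Nat.cast_nonneg (α := ℝ) m])
  have hearg : ∀ m : ℕ, 0 ≤ L + Real.log (2 * m + 1) := fun m =>
    add_nonneg hL0 (hlog_nonneg m)
  have he0 : e 0 = p - x := by
    simp only [hedef, hpdef]
    norm_num
  have hemono : Monotone e := by
    intro m n hmn
    simp only [hedef]
    have h1 : Real.log (2 * m + 1) ≤ Real.log (2 * n + 1) := by
      apply Real.log_le_log (by positivity)
      have : (m:ℝ) ≤ n := Nat.cast_le.mpr hmn
      push_cast
      linarith
    have := Real.rpow_le_rpow (hearg m) (add_le_add_right h1 L) (by norm_num : (0:ℝ) ≤ 1/3)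
    linarith
  have hetop : Tendsto e atTop atTop := by
    apply tendsto_atTop_add_const_right
    apply (tendsto_rpow_atTop (by norm_num : (0:ℝ) < 1/3)).comp
    apply tendsto_atTop_add_const_left
    apply Real.tendsto_log_atTop.comp
    apply tendsto_atTop_add_const_right
    exact (tendsto_natCast_atTop_atTop (R := ℝ)).const_mul_atTop (by norm_num)
  have he0nonneg : Real.sqrt t ≤ e 0 := by rw [he0]; linarith
  have henonneg : ∀ m, 0 ≤ e m := fun m =>
    le_trans (le_trans hst.le he0nonneg) (hemono (Nat.zero_le m))
  -- cube facts
  have hcube : ∀ m : ℕ, (x + e m) ^ 3 = L + Real.log (2 * m + 1) := by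
    intro m
    have : x + e m = (L + Real.log (2 * m + 1)) ^ ((1:ℝ)/3) := by
      simp only [hedef]; ring
    rw [this, ← Real.rpow_natCast _ 3, ← Real.rpow_mul (hearg m)]
    norm_num
  have hgval : ∀ m : ℕ, h * Real.exp ((x + e m) ^ 3) = (2 * m + 1) * (π / 2) := by
    intro m
    rw [hcube, Real.exp_add,
      Real.exp_log (show (0:ℝ) < 2 * m + 1 by positivity),
      show Real.exp L = π / (2 * h) from Real.exp_log (by positivity)]
    field_simp
  have hxe : ∀ m : ℕ, 0 ≤ x + e m := by
    intro m
    have : x + e m = (L + Real.log (2 * m + 1)) ^ ((1:ℝ)/3) := by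
      simp only [hedef]; ring
    rw [this]
    exact Real.rpow_nonneg (hearg m) _
  -- cos is nonpositive on the even intervals
  have hcos : ∀ (k : ℕ) (y : ℝ), y ∈ Set.Ico (e (2*k)) (e (2*k+1)) →
      Real.cos (h * Real.exp ((x + y) ^ 3)) ≤ 0 := by
    intro k y hy
    have hmono3 : Monotone fun z : ℝ => z ^ 3 :=
      (Odd.strictMono_pow (R := ℝ) ⟨1, by norm_num⟩).monotone
    have h1 : h * Real.exp ((x + e (2*k)) ^ 3) ≤ h * Real.exp ((x + y) ^ 3) :=
      mul_le_mul_of_nonneg_left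
        (Real.exp_le_exp.mpr (hmono3 (by linarith [hy.1]))) hh.le
    have h2 : h * Real.exp ((x + y) ^ 3) ≤ h * Real.exp ((x + e (2*k+1)) ^ 3) :=
      mul_le_mul_of_nonneg_left
        (Real.exp_le_exp.mpr (hmono3 (by linarith [hy.2.le]))) hh.le
    rw [hgval] at h1 h2
    push_cast at h1 h2
    rw [← Real.cos_sub_int_mul_two_pi (h * Real.exp ((x + y) ^ 3)) k]
    apply Real.cos_nonpos_of_pi_div_two_le_of_le
    · push_cast; linarith
    · push_cast; linarith
  -- the gaussian measure
  have hV : t.toNNReal ≠ 0 := (Real.toNNReal_pos.mpr ht).ne'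
  set γ : Measure ℝ := gaussianReal 0 t.toNNReal with hγdef
  haveI : IsProbabilityMeasure γ := by rw [hγdef]; infer_instance
  set U : Set ℝ := ⋃ k : ℕ, Set.Ico (e (2*k)) (e (2*k+1)) with hUdef
  have hUmeas : MeasurableSet U :=
    MeasurableSet.iUnion fun k => measurableSet_Ico
  have hsum_all : γ (Set.Ici (e 0)) = ∑' m : ℕ, γ (Set.Ico (e m) (e (m+1))) := by
    rw [← iUnion_Ico_eq_Ici' hemono hetop]
    exact measure_iUnion (pairwise_disjoint_Ico' fun i j hij => hemono (by omega))
      fun m => measurableSet_Ico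
  have hγU : γ U = ∑' k : ℕ, γ (Set.Ico (e (2*k)) (e (2*k+1))) := by
    rw [hUdef]
    exact measure_iUnion (pairwise_disjoint_Ico' fun i j hij => hemono (by omega))
      fun m => measurableSet_Ico
  -- length comparison of consecutive intervals
  have hlen : ∀ k : ℕ, e (2*k+1+1) - e (2*k+1) ≤ e (2*k+1) - e (2*k) := by
    intro k
    have hlog : Real.log (2*(2*k:ℕ)+1) + Real.log (2*(2*k+1+1:ℕ)+1)
        ≤ 2 * Real.log (2*(2*k+1:ℕ)+1) := by
      push_cast
      have e1 : (0:ℝ) < 4*(k:ℝ)+1 := by positivity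
      have e2 : (0:ℝ) < 4*(k:ℝ)+5 := by positivity
      have e3 : (0:ℝ) < 4*(k:ℝ)+3 := by positivity
      have l1 : Real.log (2*(2*(k:ℝ))+1) + Real.log (2*(2*(k:ℝ)+1+1)+1)
          = Real.log ((4*(k:ℝ)+1) * (4*(k:ℝ)+5)) := by
        rw [Real.log_mul e1.ne' e2.ne']
        norm_num
        ring_nf
      have l2 : 2 * Real.log (2*(2*(k:ℝ)+1)+1) = Real.log ((4*(k:ℝ)+3)^2) := by
        rw [Real.log_pow]
        norm_num
        ring_nf
      rw [l1, l2]
      apply Real.log_le_log (by positivity)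
      nlinarith
    have hconc : (x + e (2*k)) ^ 3 + (x + e (2*k+1+1)) ^ 3
        ≤ 2 * (x + e (2*k+1)) ^ 3 := by
      rw [hcube, hcube, hcube]
      linarith
    have := cube_root_concave (hxe (2*k)) (hxe (2*k+1+1)) (hxe (2*k+1)) hconc
    linarith
  have hodd_le : ∀ k : ℕ,
      γ (Set.Ico (e (2*k+1)) (e (2*k+1+1))) ≤ γ (Set.Ico (e (2*k)) (e (2*k+1))) := by
    intro k
    calc γ (Set.Ico (e (2*k+1)) (e (2*k+1+1)))
        ≤ ENNReal.ofReal ((e (2*k+1+1) - e (2*k+1))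
            * gaussianPDFReal 0 t.toNNReal (e (2*k+1))) :=
          gaussian_Ico_upper hV (henonneg _)
      _ ≤ ENNReal.ofReal ((e (2*k+1) - e (2*k))
            * gaussianPDFReal 0 t.toNNReal (e (2*k+1))) :=
          ENNReal.ofReal_le_ofReal
            (mul_le_mul_of_nonneg_right (hlen k) (gaussianPDFReal_nonneg _ _ _))
      _ ≤ γ (Set.Ico (e (2*k)) (e (2*k+1))) := gaussian_Ico_lower hV (henonneg _)
  have hhalf : γ (Set.Ici (e 0)) ≤ 2 * γ U := by
    have key := tsum_even_add_odd (f := fun m => γ (Set.Ico (e m) (e (m+1))))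
      ENNReal.summable ENNReal.summable
    rw [hsum_all, ← key, hγU, two_mul]
    exact add_le_add le_rfl
      (Summable.tsum_le_tsum (fun k => hodd_le k) ENNReal.summable ENNReal.summable)
  -- core analytic estimate
  set D : ℝ := p^2 + x^2 with hDdef
  have hsq : Real.sqrt t ^ 2 = t := Real.sq_sqrt ht.le
  have hD : t ≤ 2 * D := by
    have h1 : Real.sqrt t ≤ p - x := by linarith
    nlinarith [sq_nonneg (p + x)]
  have hu2 : 1/2 ≤ D / t := by
    rw [le_div_iff₀ ht]; linarith
  have hcore : 2 * Real.exp (-(8/t) * D)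
      ≤ Real.sqrt t * gaussianPDFReal 0 t.toNNReal (e 0 + Real.sqrt t) := by
    have hco : ((t.toNNReal : ℝ)) = t := Real.coe_toNNReal t ht.le
    unfold gaussianPDFReal
    rw [hco]
    have hsplit : Real.sqrt (2*π*t) = Real.sqrt (2*π) * Real.sqrt t :=
      Real.sqrt_mul (by positivity) t
    have hstne : Real.sqrt t ≠ 0 := hst.ne'
    have h2pine : Real.sqrt (2*π) ≠ 0 := (Real.sqrt_pos.mpr (by positivity)).ne'
    have hre : Real.sqrt t * ((Real.sqrt (2*π*t))⁻¹
          * Real.exp (-(e 0 + Real.sqrt t - 0)^2/(2*t)))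
        = (Real.sqrt (2*π))⁻¹ * Real.exp (-(e 0 + Real.sqrt t)^2/(2*t)) := by
      rw [hsplit, sub_zero]
      field_simp
    rw [hre]
    -- exponent bound
    have h4 : (e 0 + Real.sqrt t)^2 ≤ 4*D + 2*t := by
      rw [he0]
      nlinarith [sq_nonneg (p - x - Real.sqrt t), sq_nonneg (p + x)]
    have h5 : (e 0 + Real.sqrt t)^2/(2*t) ≤ 2*(D/t) + 1 := by
      rw [div_le_iff₀ (by positivity)]
      have : (2*(D/t) + 1) * (2*t) = 4*D + 2*t := by field_simp; ring
      rw [this]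
      exact h4
    have hE1 : Real.exp (-(2*(D/t) + 1)) ≤ Real.exp (-(e 0 + Real.sqrt t)^2/(2*t)) := by
      apply Real.exp_le_exp.mpr
      have : -(e 0 + Real.sqrt t)^2/(2*t) = -((e 0 + Real.sqrt t)^2/(2*t)) := by ring
      rw [this]
      linarith
    have h26 : Real.sqrt (2*π) ≤ 2.6 := by
      rw [show (2.6:ℝ) = Real.sqrt (2.6^2) from (Real.sqrt_sq (by norm_num)).symm]
      apply Real.sqrt_le_sqrt
      nlinarith [Real.pi_lt_d2]
    have hexp2 : (7:ℝ) ≤ Real.exp 2 := by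
      have he9 := Real.exp_one_gt_d9
      have h2 : Real.exp 2 = Real.exp 1 * Real.exp 1 := by
        rw [← Real.exp_add]; norm_num
      nlinarith
    have hh6 : 2 * Real.sqrt (2*π) ≤ Real.exp (6*(D/t) - 1) :=
      calc 2 * Real.sqrt (2*π) ≤ 2 * 2.6 := by linarith
        _ ≤ 7 := by norm_num
        _ ≤ Real.exp 2 := hexp2
        _ ≤ Real.exp (6*(D/t) - 1) := Real.exp_le_exp.mpr (by linarith)
    have hq : Real.exp (-(2*(D/t)+1))
        = Real.exp (6*(D/t)-1) * Real.exp (-(8/t) * D) := by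
      rw [← Real.exp_add]
      congr 1
      field_simp
      ring
    calc 2 * Real.exp (-(8/t) * D)
        = (Real.sqrt (2*π))⁻¹ * (2 * Real.sqrt (2*π) * Real.exp (-(8/t) * D)) := by
          field_simp
      _ ≤ (Real.sqrt (2*π))⁻¹ * (Real.exp (6*(D/t)-1) * Real.exp (-(8/t) * D)) := by
          apply mul_le_mul_of_nonneg_left _ (by positivity)
          exact mul_le_mul_of_nonneg_right hh6 (Real.exp_pos _).le
      _ = (Real.sqrt (2*π))⁻¹ * Real.exp (-(2*(D/t)+1)) := by rw [hq]
      _ ≤ (Real.sqrt (2*π))⁻¹ * Real.exp (-(e 0 + Real.sqrt t)^2/(2*t)) := by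
          apply mul_le_mul_of_nonneg_left hE1 (by positivity)
  -- lower bound for the measure of U
  have hlowIci : ENNReal.ofReal (2 * Real.exp (-(8/t) * D)) ≤ γ (Set.Ici (e 0)) := by
    have hlo := gaussian_Ico_lower (V := t.toNNReal) hV
      (u := e 0) (v := e 0 + Real.sqrt t) (henonneg 0)
    rw [add_sub_cancel_left] at hlo
    calc ENNReal.ofReal (2 * Real.exp (-(8/t) * D))
        ≤ ENNReal.ofReal (Real.sqrt t * gaussianPDFReal 0 t.toNNReal (e 0 + Real.sqrt t)) :=
          ENNReal.ofReal_le_ofReal hcore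
      _ ≤ γ (Set.Ico (e 0) (e 0 + Real.sqrt t)) := hlo
      _ ≤ γ (Set.Ici (e 0)) := measure_mono Set.Ico_subset_Ici_self
  have hγUlow : ENNReal.ofReal (Real.exp (-(8/t) * D)) ≤ γ U := by
    have h2 : ENNReal.ofReal (2 * Real.exp (-(8/t) * D))
        = 2 * ENNReal.ofReal (Real.exp (-(8/t) * D)) := by
      rw [ENNReal.ofReal_mul (by norm_num)]
      norm_num
    have h3 := hlowIci.trans hhalf
    rw [h2] at h3
    exact (ENNReal.mul_le_mul_iff_right (by norm_num) (by norm_num)).mp h3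
  -- reduce the expectation to the gaussian integral
  set F : ℝ → ℝ := fun y => Real.cos (h * Real.exp ((x + y) ^ 3)) with hFdef
  have hFcont : Continuous F := by
    apply Real.continuous_cos.comp
    apply continuous_const.mul
    apply Real.continuous_exp.comp
    exact (continuous_const.add continuous_id).pow 3
  have hmap : P.map (W t) = γ := by
    have hgi := hW.gauss_increments 0 t le_rfl ht.le
    have hfun : (fun ω => W t ω - W 0 ω) = W t := by
      funext ω; rw [hW.start]; ring
    rw [hfun, sub_zero] at hgi
    rw [hγdef, ← hgi]
  have hint_map : ∫ ω, F (W t ω) ∂P = ∫ y, F y ∂γ := by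
    rw [← hmap]
    exact (integral_map (hW.measurable t).aemeasurable
      hFcont.aestronglyMeasurable).symm
  have hFint : Integrable F γ := by
    apply Integrable.mono' (integrable_const 1) hFcont.aestronglyMeasurable
    filter_upwards with y
    rw [Real.norm_eq_abs]
    exact Real.abs_cos_le_one _
  have hsub : 1 - ∫ y, F y ∂γ = ∫ y, (1 - F y) ∂γ := by
    rw [integral_sub (integrable_const 1) hFint, integral_const]
    simp
  have hind : ∫ y, U.indicator (fun _ => (1:ℝ)) y ∂γ ≤ ∫ y, (1 - F y) ∂γ := by
    apply integral_mono ((integrable_const 1).indicator hUmeas)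
      ((integrable_const 1).sub hFint)
    intro y
    by_cases hy : y ∈ U
    · rw [Set.indicator_of_mem hy]
      obtain ⟨k, hk⟩ : ∃ k, y ∈ Set.Ico (e (2*k)) (e (2*k+1)) := Set.mem_iUnion.mp hy
      have := hcos k y hk
      simp only [Pi.sub_apply, hFdef]
      linarith
    · rw [Set.indicator_of_notMem hy]
      have := Real.cos_le_one (h * Real.exp ((x + y) ^ 3))
      simp only [Pi.sub_apply, hFdef]
      linarith
  have hindval : ∫ y, U.indicator (fun _ => (1:ℝ)) y ∂γ = (γ U).toReal := by
    exact MeasureTheory.integral_indicator_one hUmeas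
  -- put everything together
  rw [ge_iff_le]
  calc Real.exp (-(8/t) * (|L| ^ ((2:ℝ)/3) + x^2))
      = Real.exp (-(8/t) * D) := by rw [hp2]
    _ ≤ (γ U).toReal :=
        (ENNReal.ofReal_le_iff_le_toReal (measure_ne_top γ U)).mp hγUlow
    _ = ∫ y, U.indicator (fun _ => (1:ℝ)) y ∂γ := hindval.symm
    _ ≤ ∫ y, (1 - F y) ∂γ := hind
    _ = 1 - ∫ y, F y ∂γ := hsub.symm
    _ = 1 - ∫ ω, F (W t ω) ∂P := by rw [hint_map]
    _ = 1 - ∫ ω, Real.cos (h * Real.exp ((x + W t ω) ^ 3)) ∂P := rfl
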